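/- Let f : ℝ² → ℝ be continuous and Lebesgue integrable, and let φ(s) = ∫_{ℝ²} exp(i(s₁ a₁ + s₂ a₂)) f(a) da denote its Fourier transform. Assume φ is Lebesgue integrable on ℝ². Then for every b = (b₁, b₂) ∈ ℝ²: f(b) = (2π)^{-2} ∫_ℝ ∫_ℝ |t| · exp(-i(t b₁ + t w b₂)) · φ(t, t w) dw dt. -/

import Mathlib

open MeasureTheory FourierTransform Real
open scoped RealInnerProductSpace

/-- Fourier inversion on the cone `{(t, t·w)}`: for a continuous integrable `f : ℝ² → ℝ` with
integrable Fourier transform `φ`, one has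
`f(b) = (2π)⁻² ∫ t, ∫ w, |t| exp(-i(t b₁ + t w b₂)) φ(t, t w) dw dt`. -/
theorem stmt_5 (f : ℝ × ℝ → ℝ) (hf_cont : Continuous f) (hf_int : Integrable f)
    (φ : ℝ × ℝ → ℂ)
    (hφ : ∀ s : ℝ × ℝ,
      φ s = ∫ a : ℝ × ℝ, Complex.exp (Complex.I * ((s.1 * a.1 + s.2 * a.2 : ℝ) : ℂ)) * (f a : ℂ))
    (hφ_int : Integrable φ) :
    ∀ b : ℝ × ℝ, (f b : ℂ) =
      (((2 * Real.pi : ℝ) : ℂ)) ⁻¹ ^ 2 *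
        ∫ t : ℝ, ∫ w : ℝ,
          (Complex.ofReal |t|) *
            Complex.exp (-(Complex.I * ((t * b.1 + (t * w) * b.2 : ℝ) : ℂ))) * φ (t, t * w) := by
  intro b
  have hπ : (2 * Real.pi) ≠ 0 := by positivity
  set e : EuclideanSpace ℝ (Fin 2) ≃ᵐ ℝ × ℝ :=
    (MeasurableEquiv.toLp 2 (Fin 2 → ℝ)).symm.trans (MeasurableEquiv.finTwoArrow) with he_def
  have he : MeasurePreserving e :=
    (volume_preserving_finTwoArrow ℝ).comp
      (EuclideanSpace.volume_preserving_symm_measurableEquiv_toLp (Fin 2))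
  set F : EuclideanSpace ℝ (Fin 2) → ℂ := fun v => (f (e v) : ℂ) with hF_def
  have hf_intC : Integrable fun a : ℝ × ℝ => (f a : ℂ) := hf_int.ofReal
  have hF_int : Integrable F := (he.integrable_comp_emb e.measurableEmbedding).mpr hf_intC
  have he_cont : Continuous fun v : EuclideanSpace ℝ (Fin 2) => e v := by
    have : (fun v : EuclideanSpace ℝ (Fin 2) => e v)
        = fun v : EuclideanSpace ℝ (Fin 2) => (v 0, v 1) := rfl
    rw [this]; fun_prop
  have hF_cont : Continuous F := Complex.continuous_ofReal.comp (hf_cont.comp he_cont)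
  have hinner : ∀ v w : EuclideanSpace ℝ (Fin 2), ⟪v, w⟫ = v 0 * w 0 + v 1 * w 1 := by
    intro v w
    simp [PiLp.inner_apply, RCLike.inner_apply, Fin.sum_univ_two]
    ring
  -- the Fourier transform of F
  have hFT : ∀ w, 𝓕 F w = φ (e ((-(2 * Real.pi)) • w)) := by
    intro w
    rw [Real.fourier_eq', hφ,
      ← he.integral_comp' (g := fun a : ℝ × ℝ =>
        Complex.exp (Complex.I * (((e ((-(2 * Real.pi)) • w)).1 * a.1
          + (e ((-(2 * Real.pi)) • w)).2 * a.2 : ℝ) : ℂ)) * (f a : ℂ))]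
    congr 1
    funext v
    rw [smul_eq_mul]
    congr 1
    have h1 : (e ((-(2 * Real.pi)) • w)).1 = -(2 * Real.pi) * w 0 := rfl
    have h2 : (e ((-(2 * Real.pi)) • w)).2 = -(2 * Real.pi) * w 1 := rfl
    have h3 : (e v).1 = v 0 := rfl
    have h4 : (e v).2 = v 1 := rfl
    rw [h1, h2, h3, h4, hinner]
    congr 1
    push_cast
    ring
  have hφe_int : Integrable (fun v : EuclideanSpace ℝ (Fin 2) => φ (e v)) :=
    (he.integrable_comp_emb e.measurableEmbedding).mpr hφ_int
  have h𝓕F_int : Integrable (𝓕 F) := by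
    have hfun : 𝓕 F = fun w => φ (e ((-(2 * Real.pi)) • w)) := funext hFT
    rw [hfun]
    exact hφe_int.comp_smul (neg_ne_zero.mpr hπ)
  have hinv : 𝓕⁻ (𝓕 F) = F := hF_cont.fourierInv_fourier_eq hF_int h𝓕F_int
  -- the point b as a euclidean vector
  set bV : EuclideanSpace ℝ (Fin 2) := (WithLp.toLp 2 ![b.1, b.2] : EuclideanSpace ℝ (Fin 2)) with hbV
  have hebV : e bV = b := rfl
  -- the integrand on the plane
  set G : ℝ × ℝ → ℂ :=
    fun s => Complex.exp (-(Complex.I * ((s.1 * b.1 + s.2 * b.2 : ℝ) : ℂ))) * φ s with hG_def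
  -- Step A : f b = (2π)⁻² ∫ G
  have stepA : (f b : ℂ) = ((2 * Real.pi) ^ 2)⁻¹ • ∫ s : ℝ × ℝ, G s := by
    have h0 : (f b : ℂ) = 𝓕⁻ (𝓕 F) bV := by rw [hinv]; rfl
    rw [h0, Real.fourierInv_eq']
    have key : ∀ v : EuclideanSpace ℝ (Fin 2),
        Complex.exp (((2 * Real.pi * ⟪v, bV⟫ : ℝ) : ℂ) * Complex.I) • 𝓕 F v
          = G (e ((-(2 * Real.pi)) • v)) := by
      intro v
      rw [hFT, smul_eq_mul, hG_def]
      have h1 : (e ((-(2 * Real.pi)) • v)).1 = -(2 * Real.pi) * v 0 := rfl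
      have h2 : (e ((-(2 * Real.pi)) • v)).2 = -(2 * Real.pi) * v 1 := rfl
      have hb0 : bV 0 = b.1 := rfl
      have hb1 : bV 1 = b.2 := rfl
      congr 1
      rw [h1, h2, hinner, hb0, hb1]
      congr 1
      push_cast
      ring
    rw [integral_congr_ae (Filter.Eventually.of_forall key)]
    have := MeasureTheory.Measure.integral_comp_smul (volume : Measure (EuclideanSpace ℝ (Fin 2)))
      (fun v => G (e v)) (-(2 * Real.pi))
    rw [this, he.integral_comp']
    congr 1
    rw [finrank_euclideanSpace_fin]
    rw [abs_inv, abs_pow, abs_neg, abs_of_pos (by positivity : (0:ℝ) < 2 * Real.pi)]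
  -- integrability of G
  have hG_int : Integrable G := by
    apply hφ_int.bdd_mul (c := 1)
    · apply Continuous.aestronglyMeasurable
      fun_prop
    · refine Filter.Eventually.of_forall (fun s => ?_)
      rw [Complex.norm_exp]
      simp
  -- Step B : change of variables on the cone
  have stepB : ∫ s : ℝ × ℝ, G s
      = ∫ t : ℝ, ∫ w : ℝ, (Complex.ofReal |t|) *
          Complex.exp (-(Complex.I * ((t * b.1 + (t * w) * b.2 : ℝ) : ℂ))) * φ (t, t * w) := by
    have hpt : ∀ t w : ℝ, (Complex.ofReal |t|) *
          Complex.exp (-(Complex.I * ((t * b.1 + (t * w) * b.2 : ℝ) : ℂ))) * φ (t, t * w)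
        = (Complex.ofReal |t|) * G (t, t * w) := by
      intro t w
      simp only [hG_def, mul_assoc]
    have hprod : ∫ s : ℝ × ℝ, G s = ∫ t : ℝ, ∫ y : ℝ, G (t, y) := by
      rw [show (volume : Measure (ℝ × ℝ)) = (volume : Measure ℝ).prod volume from
        Measure.volume_eq_prod ℝ ℝ]
      exact integral_prod G (by rwa [Measure.volume_eq_prod ℝ ℝ] at hG_int)
    rw [hprod]
    apply integral_congr_ae
    filter_upwards [Filter.Eventually.of_forall (fun t : ℝ => trivial),
      (ae_iff.2 (by simp : (volume : Measure ℝ) {t : ℝ | ¬ t ≠ 0} = 0) :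
        ∀ᵐ t : ℝ, t ≠ 0)] with t _ ht
    simp_rw [hpt]
    rw [integral_const_mul]
    have := MeasureTheory.Measure.integral_comp_mul_left (fun y => G (t, y)) t
    rw [this, Complex.real_smul]
    rw [← mul_assoc, ← Complex.ofReal_mul, abs_inv, mul_inv_cancel₀ (abs_ne_zero.mpr ht)]
    simp
  rw [stepA, stepB, Complex.real_smul]
  push_cast
  ring
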